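/- Let P(x,y) be a biquadratic form in x ∈ ℝ^m, y ∈ ℝ^n with minimal SOS rank R, and define P₊(x, y, y_{n+1}) = P(x,y) + x₁² y_{n+1}². Then the SOS rank of P₊ (as a biquadratic form in x ∈ ℝ^m and (y, y_{n+1}) ∈ ℝ^{n+1}) is exactly R + 1. -/

import Mathlib

/-- `c` gives an SOS decomposition of the biquadratic form `P` into `R` squares
of bilinear forms. -/
def IsSOSDecomp (m n R : ℕ) (P : (Fin m → ℝ) → (Fin n → ℝ) → ℝ)
    (c : Fin R → Fin m → Fin n → ℝ) : Prop :=
  ∀ x y, P x y = ∑ t, (∑ i, ∑ j, c t i j * x i * y j)^2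

/-- The SOS rank: the minimal number of squares of bilinear forms summing to `P`. -/
noncomputable def sosRank (m n : ℕ) (P : (Fin m → ℝ) → (Fin n → ℝ) → ℝ) : ℕ :=
  sInf {R | ∃ c : Fin R → Fin m → Fin n → ℝ, IsSOSDecomp m n R P c}

noncomputable def bil {m n : ℕ} (c : Fin m → Fin n → ℝ) (x : Fin m → ℝ) (y : Fin n → ℝ) : ℝ :=
  ∑ i, ∑ j, c i j * x i * y j

lemma key_split {m n S : ℕ} (P : (Fin (m+1) → ℝ) → (Fin n → ℝ) → ℝ)
    (c : Fin S → Fin (m+1) → Fin (n+1) → ℝ)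
    (h : IsSOSDecomp (m+1) (n+1) S
      (fun x y => P x (fun j => y j.castSucc) + (x 0)^2 * (y (Fin.last n))^2) c)
    (x : Fin (m+1) → ℝ) (yh : Fin n → ℝ) (s : ℝ) :
    P x yh + (x 0)^2 * s^2
      = ∑ t, (bil (fun i j => c t i (Fin.castSucc j)) x yh
              + (∑ i, c t i (Fin.last n) * x i) * s)^2 := by
  have := h x (Fin.snoc yh s)
  simp only [Fin.snoc_castSucc, Fin.snoc_last] at this
  rw [this]
  refine Finset.sum_congr rfl fun t _ => ?_
  congr 1
  have inner : ∀ i, (∑ j, c t i j * x i * (Fin.snoc yh s : Fin (n+1) → ℝ) j)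
      = (∑ j : Fin n, c t i j.castSucc * x i * yh j) + c t i (Fin.last n) * x i * s := by
    intro i
    rw [Fin.sum_univ_castSucc]
    simp [Fin.snoc_castSucc, Fin.snoc_last]
  simp only [inner]
  rw [Finset.sum_add_distrib, Finset.sum_mul]
  rfl

lemma bil_smul {m n : ℕ} (C : Fin m → Fin n → ℝ) (e : ℝ) (x y) :
    bil (fun i j => e * C i j) x y = e * bil C x y := by
  simp [bil, Finset.mul_sum, mul_assoc]

lemma bil_sub {m n : ℕ} (A C : Fin m → Fin n → ℝ) (e : ℝ) (x y) :
    bil (fun i j => A i j - e * C i j) x y = bil A x y - e * bil C x y := by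
  simp [bil, Finset.mul_sum, sub_mul, Finset.sum_sub_distrib, mul_assoc]

lemma bil_sum {m n S : ℕ} (F : Fin S → Fin m → Fin n → ℝ) (x y) :
    bil (fun i j => ∑ t, F t i j) x y = ∑ t, bil (F t) x y := by
  simp only [bil, Finset.sum_mul]
  calc (∑ i, ∑ j, ∑ t, F t i j * x i * y j)
      = ∑ i, ∑ t, ∑ j, F t i j * x i * y j :=
        Finset.sum_congr rfl fun i _ => Finset.sum_comm
    _ = ∑ t, ∑ i, ∑ j, F t i j * x i * y j := Finset.sum_comm

lemma quad_coeffs {S : ℕ} (u v : Fin S → ℝ) (a b : ℝ)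
    (h : ∀ s : ℝ, a + b * s^2 = ∑ t, (u t + v t * s)^2) :
    a = ∑ t, (u t)^2 ∧ b = ∑ t, (v t)^2 ∧ ∑ t, u t * v t = 0 := by
  have e : ∀ s : ℝ, ∑ t, (u t + v t * s)^2
      = ∑ t, (u t)^2 + (2*s) * ∑ t, (u t * v t) + s^2 * ∑ t, (v t)^2 := by
    intro s
    rw [Finset.mul_sum, Finset.mul_sum, ← Finset.sum_add_distrib, ← Finset.sum_add_distrib]
    refine Finset.sum_congr rfl fun t _ => by ring
  have h0 := h 0; have h1 := h 1; have h2 := h (-1)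
  rw [e] at h0 h1 h2
  refine ⟨by linarith, by linarith, by linarith⟩

lemma house {S : ℕ} (w u : Fin S → ℝ) (d p : ℝ) (hd : d = ∑ t, (w t)^2)
    (hp : p = ∑ t, w t * u t) (hd0 : d ≠ 0) :
    ∑ t, (u t - (2 * w t / d) * p)^2 = ∑ t, (u t)^2 := by
  have expand : ∑ t, (u t - (2 * w t / d) * p)^2
      = ∑ t, (u t)^2 - (4*p/d) * ∑ t, (w t * u t) + (4*p^2/d^2) * ∑ t, (w t)^2 := by
    rw [Finset.mul_sum, Finset.mul_sum, ← Finset.sum_sub_distrib, ← Finset.sum_add_distrib]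
    refine Finset.sum_congr rfl fun t _ => by field_simp; ring
  rw [expand, ← hp, ← hd]
  field_simp
  ring

lemma lower_aux {m n S' : ℕ} (P : (Fin (m+1) → ℝ) → (Fin n → ℝ) → ℝ)
    (c : Fin (S'+1) → Fin (m+1) → Fin (n+1) → ℝ)
    (h : IsSOSDecomp (m+1) (n+1) (S'+1)
      (fun x y => P x (fun j => y j.castSucc) + (x 0)^2 * (y (Fin.last n))^2) c) :
    ∃ c' : Fin S' → Fin (m+1) → Fin n → ℝ, IsSOSDecomp (m+1) n S' P c' := by
  set M : Fin (S'+1) → Fin (m+1) → Fin n → ℝ := fun t i j => c t i j.castSucc with hM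
  set N : Fin (S'+1) → Fin (m+1) → ℝ := fun t i => c t i (Fin.last n) with hNdef
  set u : (Fin (m+1) → ℝ) → (Fin n → ℝ) → Fin (S'+1) → ℝ :=
    fun x yh t => bil (M t) x yh with hu
  set v : (Fin (m+1) → ℝ) → Fin (S'+1) → ℝ := fun x t => ∑ i, N t i * x i with hvdef
  have coeffs : ∀ x yh, P x yh = ∑ t, (u x yh t)^2 ∧ (x 0)^2 = ∑ t, (v x t)^2 ∧
      ∑ t, u x yh t * v x t = 0 := by
    intro x yh
    exact quad_coeffs _ _ _ _ (fun s => key_split P c h x yh s)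
  have hP : ∀ x yh, P x yh = ∑ t, (u x yh t)^2 := fun x yh => (coeffs x yh).1
  have hB : ∀ x : Fin (m+1) → ℝ, (x 0)^2 = ∑ t, (v x t)^2 := fun x => (coeffs x 0).2.1
  have hC : ∀ x yh, ∑ t, u x yh t * v x t = 0 := fun x yh => (coeffs x yh).2.2
  -- v evaluated at single vectors
  have hvsingle : ∀ (i : Fin (m+1)) t, v (Pi.single i 1) t = N t i := by
    intro i t
    simp [hvdef, Pi.single_apply]
  have hN : ∀ t i, i ≠ 0 → N t i = 0 := by
    intro t i hi
    have hb := hB (Pi.single i 1)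
    simp only [hvsingle] at hb
    rw [Pi.single_apply, if_neg (by simpa using (Ne.symm hi))] at hb
    have h0 : ∑ t, (N t i)^2 = 0 := by rw [← hb]; ring
    have := (Finset.sum_eq_zero_iff_of_nonneg (fun t _ => sq_nonneg (N t i))).1 h0 t
      (Finset.mem_univ t)
    exact pow_eq_zero_iff (two_ne_zero) |>.1 this
  have hlam : ∑ t, (N t 0)^2 = 1 := by
    have hb := hB (Pi.single 0 1)
    simp only [hvsingle] at hb
    rw [Pi.single_apply, if_pos rfl] at hb
    linarith [hb]
  have hv : ∀ (x : Fin (m+1) → ℝ) t, v x t = N t 0 * x 0 := by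
    intro x t
    show (∑ i, N t i * x i) = N t 0 * x 0
    rw [Finset.sum_eq_single 0]
    · intro i _ hi; rw [hN t i hi, zero_mul]
    · intro hmem; exact absurd (Finset.mem_univ _) hmem
  have hC' : ∀ x yh, (∑ t, u x yh t * N t 0) * x 0 = 0 := by
    intro x yh
    have := hC x yh
    simp only [hv] at this
    rw [Finset.sum_mul]
    rw [← this]
    refine Finset.sum_congr rfl fun t _ => by ring
  -- coefficient identity
  have usingle : ∀ (x : Fin (m+1) → ℝ) (j : Fin n) t,
      u x (Pi.single j 1) t = ∑ i, M t i j * x i := by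
    intro x j t
    simp only [hu, bil]
    refine Finset.sum_congr rfl fun i _ => ?_
    rw [Finset.sum_eq_single j]
    · rw [Pi.single_apply, if_pos rfl, mul_one]
    · intro k _ hk; rw [Pi.single_apply, if_neg (by simpa using hk), mul_zero]
    · intro hmem; exact absurd (Finset.mem_univ _) hmem
  have hA0 : ∀ i j, ∑ t, N t 0 * M t i j = 0 := by
    have h0 : ∀ j, ∑ t, N t 0 * M t 0 j = 0 := by
      intro j
      have := hC' (Pi.single 0 1) (Pi.single j 1)
      simp only [usingle] at this
      rw [Pi.single_apply, if_pos rfl, mul_one] at this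
      rw [← this]
      refine Finset.sum_congr rfl fun t _ => ?_
      rw [Finset.sum_eq_single 0]
      · rw [Pi.single_apply, if_pos rfl]; ring
      · intro i _ hi; rw [Pi.single_apply, if_neg (by simpa using hi), mul_zero]
      · intro hmem; exact absurd (Finset.mem_univ _) hmem
    intro i j
    by_cases hi : i = 0
    · rw [hi]; exact h0 j
    · have := hC' (fun k => (Pi.single i 1 : Fin (m+1) → ℝ) k + (Pi.single 0 1 : Fin (m+1) → ℝ) k) (Pi.single j 1)
      simp only [usingle] at this
      have hx0 : (Pi.single i 1 : Fin (m+1) → ℝ) 0 + (Pi.single 0 1 : Fin (m+1) → ℝ) 0 = 1 := by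
        rw [Pi.single_apply, if_neg (by simpa using (Ne.symm hi)), Pi.single_apply, if_pos rfl]
        ring
      rw [hx0, mul_one] at this
      have hsum : ∀ t, (∑ k, M t k j * ((Pi.single i 1 : Fin (m+1) → ℝ) k + (Pi.single 0 1 : Fin (m+1) → ℝ) k))
          = M t i j + M t 0 j := by
        intro t
        simp only [mul_add, Finset.sum_add_distrib]
        congr 1
        · rw [Finset.sum_eq_single i]
          · rw [Pi.single_apply, if_pos rfl, mul_one]
          · intro k _ hk; rw [Pi.single_apply, if_neg (by simpa using hk), mul_zero]
          · intro hmem; exact absurd (Finset.mem_univ _) hmem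
        · rw [Finset.sum_eq_single (0 : Fin (m+1))]
          · rw [Pi.single_apply, if_pos rfl, mul_one]
          · intro k _ hk; rw [Pi.single_apply, if_neg (by simpa using hk), mul_zero]
          · intro hmem; exact absurd (Finset.mem_univ _) hmem
      simp only [hsum] at this
      have expand : ∑ t, (M t i j + M t 0 j) * N t 0
          = ∑ t, N t 0 * M t i j + ∑ t, N t 0 * M t 0 j := by
        rw [← Finset.sum_add_distrib]
        refine Finset.sum_congr rfl fun t _ => by ring
      rw [expand, h0 j] at this
      linarith [this]
  have hlin : ∀ x yh, ∑ t, N t 0 * u x yh t = 0 := by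
    intro x yh
    have e1 : ∑ t, N t 0 * u x yh t = bil (fun i j => ∑ t, N t 0 * M t i j) x yh := by
      rw [bil_sum (fun t i j => N t 0 * M t i j) x yh]
      exact Finset.sum_congr rfl fun t _ => (bil_smul (M t) (N t 0) x yh).symm
    rw [e1]
    have e2 : (fun (i : Fin (m+1)) (j : Fin n) => ∑ t, N t 0 * M t i j)
        = fun _ _ => (0:ℝ) := by
      funext i j; exact hA0 i j
    rw [e2]
    simp [bil]
  -- now case split
  set L := Fin.last S' with hL
  set w : Fin (S'+1) → ℝ := fun t => N t 0 - if t = L then 1 else 0 with hw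
  set d : ℝ := ∑ t, (w t)^2 with hddef
  have hd : d = 2 - 2 * N L 0 := by
    rw [hddef]
    have e : ∀ t, (w t)^2 = (N t 0)^2 - (if t = L then 2 * N t 0 - 1 else 0) := by
      intro t; simp only [hw]; split <;> ring
    simp only [e]
    rw [Finset.sum_sub_distrib, hlam, Finset.sum_ite_eq' Finset.univ L (fun t => 2 * N t 0 - 1)]
    simp
    ring
  by_cases hd0 : d = 0
  · -- λ is the last basis vector
    have hNL : N L 0 = 1 := by rw [hd] at hd0; linarith
    have hz : ∀ t, t ≠ L → N t 0 = 0 := by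
      intro t ht
      have split : ∑ t', (N t' 0)^2 = ∑ s : Fin S', (N s.castSucc 0)^2 + (N L 0)^2 :=
        Fin.sum_univ_castSucc _
      rw [hlam, hNL] at split
      have h0 : ∑ s : Fin S', (N s.castSucc 0)^2 = 0 := by linarith
      obtain ⟨s, rfl⟩ := Fin.eq_castSucc_of_ne_last ht
      have := (Finset.sum_eq_zero_iff_of_nonneg (fun s _ => sq_nonneg (N s.castSucc 0))).1 h0 s
        (Finset.mem_univ s)
      exact pow_eq_zero_iff (two_ne_zero) |>.1 this
    have uL0 : ∀ x yh, u x yh L = 0 := by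
      intro x yh
      have := hlin x yh
      rw [Finset.sum_eq_single L] at this
      · rw [hNL, one_mul] at this; exact this
      · intro t _ ht; rw [hz t ht, zero_mul]
      · intro hmem; exact absurd (Finset.mem_univ _) hmem
    refine ⟨fun s => M s.castSucc, ?_⟩
    intro x yh
    rw [hP x yh, Fin.sum_univ_castSucc (f := fun t => (u x yh t)^2), uL0 x yh]
    norm_num
    exact Finset.sum_congr rfl fun s _ => rfl
  · -- Householder case
    set W : Fin (m+1) → Fin n → ℝ := fun i j => ∑ t, w t * M t i j with hW
    refine ⟨fun s i j => M s.castSucc i j - (2 * w s.castSucc / d) * W i j, ?_⟩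
    intro x yh
    set p : ℝ := ∑ t, w t * u x yh t with hp
    have hbilW : bil W x yh = p := by
      rw [hW, bil_sum (fun t i j => w t * M t i j) x yh, hp]
      exact Finset.sum_congr rfl fun t _ => (bil_smul (M t) (w t) x yh)
    have hbil : ∀ s : Fin S',
        (∑ i, ∑ j, (M s.castSucc i j - (2 * w s.castSucc / d) * W i j) * x i * yh j)
          = u x yh s.castSucc - (2 * w s.castSucc / d) * p := by
      intro s
      have := bil_sub (M s.castSucc) W (2 * w s.castSucc / d) x yh
      rw [hbilW] at this
      exact this
    have hpval : p = - u x yh L := by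
      rw [hp]
      have e : ∀ t, w t * u x yh t
          = N t 0 * u x yh t - (if t = L then u x yh t else 0) := by
        intro t; simp only [hw]; split <;> ring
      simp only [e]
      rw [Finset.sum_sub_distrib, hlin x yh,
        Finset.sum_ite_eq' Finset.univ L (fun t => u x yh t)]
      simp
    have huL : u x yh L - (2 * w L / d) * p = 0 := by
      have hwL : w L = N L 0 - 1 := by simp [hw]
      have hdne : (2:ℝ) - 2 * N L 0 ≠ 0 := by rw [← hd]; exact hd0
      rw [hpval, hwL, hd]
      have hdne' : (1:ℝ) - N L 0 ≠ 0 := fun h0 => hdne (by linarith)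
      field_simp
      ring
    have fullsum : ∑ t, (u x yh t - (2 * w t / d) * p)^2 = ∑ t, (u x yh t)^2 :=
      house w (u x yh) d p hddef hp hd0
    calc P x yh = ∑ t, (u x yh t)^2 := hP x yh
      _ = ∑ t, (u x yh t - (2 * w t / d) * p)^2 := fullsum.symm
      _ = ∑ s : Fin S', (u x yh s.castSucc - (2 * w s.castSucc / d) * p)^2 := by
          rw [Fin.sum_univ_castSucc (f := fun t => (u x yh t - (2 * w t / d) * p)^2), huL]
          norm_num
      _ = ∑ s : Fin S', (∑ i, ∑ j,
            (M s.castSucc i j - (2 * w s.castSucc / d) * W i j) * x i * yh j)^2 := by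
          refine Finset.sum_congr rfl fun s _ => ?_
          rw [hbil s]

lemma zero_aux {m n : ℕ} (P : (Fin (m+1) → ℝ) → (Fin n → ℝ) → ℝ)
    (c : Fin 0 → Fin (m+1) → Fin (n+1) → ℝ)
    (h : IsSOSDecomp (m+1) (n+1) 0
      (fun x y => P x (fun j => y j.castSucc) + (x 0)^2 * (y (Fin.last n))^2) c) :
    False := by
  have coeffs := quad_coeffs _ _ _ _ (fun s => key_split P c h (Pi.single 0 1) 0 s)
  have h2 := coeffs.2.1
  rw [Pi.single_apply, if_pos rfl] at h2
  simp at h2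

/-- if `P` is a biquadratic form with minimal SOS rank `R`, then
`P₊(x, y, y_{n+1}) = P(x,y) + x₁² y_{n+1}²` has SOS rank exactly `R + 1`. -/
theorem sosRank_add_new_square (m n : ℕ) (P : (Fin (m+1) → ℝ) → (Fin n → ℝ) → ℝ)
    (R : ℕ) (hR : R = sosRank (m+1) n P)
    (hsos : ∃ c : Fin R → Fin (m+1) → Fin n → ℝ, IsSOSDecomp (m+1) n R P c) :
    sosRank (m+1) (n+1)
      (fun x y => P x (fun j => y j.castSucc) + (x 0)^2 * (y (Fin.last n))^2)
      = R + 1 := by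
  obtain ⟨c, hc⟩ := hsos
  set cplus : Fin (R+1) → Fin (m+1) → Fin (n+1) → ℝ :=
    Fin.snoc (fun t i => Fin.snoc (c t i) 0)
      (fun i => Fin.snoc 0 (if i = 0 then 1 else 0)) with hcplus
  have hup : IsSOSDecomp (m+1) (n+1) (R+1)
      (fun x y => P x (fun j => y j.castSucc) + (x 0)^2 * (y (Fin.last n))^2) cplus := by
    intro x y
    show P x (fun j => y j.castSucc) + (x 0)^2 * (y (Fin.last n))^2 = _
    rw [hc x (fun j => y j.castSucc),
      Fin.sum_univ_castSucc (f := fun t => (∑ i, ∑ j, cplus t i j * x i * y j)^2)]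
    congr 1
    · refine Finset.sum_congr rfl fun t _ => ?_
      congr 1
      refine Finset.sum_congr rfl fun i _ => ?_
      rw [Fin.sum_univ_castSucc (f := fun j => cplus t.castSucc i j * x i * y j)]
      simp [hcplus, Fin.snoc_castSucc, Fin.snoc_last]
    · have e : ∀ i : Fin (m+1), (∑ j, cplus (Fin.last R) i j * x i * y j)
          = (if i = 0 then 1 else 0) * x i * y (Fin.last n) := by
        intro i
        rw [Fin.sum_univ_castSucc (f := fun j => cplus (Fin.last R) i j * x i * y j)]
        simp [hcplus, Fin.snoc_castSucc, Fin.snoc_last]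
      have e2 : (∑ i, ∑ j, cplus (Fin.last R) i j * x i * y j)
          = x 0 * y (Fin.last n) := by
        rw [Finset.sum_congr rfl fun i _ => e i, Finset.sum_eq_single (0 : Fin (m+1))]
        · rw [if_pos rfl, one_mul]
        · intro k _ hk; rw [if_neg hk, zero_mul, zero_mul]
        · intro hmem; exact absurd (Finset.mem_univ _) hmem
      rw [e2]
      ring
  have mem : (R+1) ∈ {S | ∃ c' : Fin S → Fin (m+1) → Fin (n+1) → ℝ,
      IsSOSDecomp (m+1) (n+1) S
        (fun x y => P x (fun j => y j.castSucc) + (x 0)^2 * (y (Fin.last n))^2) c'} :=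
    ⟨cplus, hup⟩
  have lb : ∀ S ∈ {S | ∃ c' : Fin S → Fin (m+1) → Fin (n+1) → ℝ,
      IsSOSDecomp (m+1) (n+1) S
        (fun x y => P x (fun j => y j.castSucc) + (x 0)^2 * (y (Fin.last n))^2) c'},
      R + 1 ≤ S := by
    rintro S ⟨c', hc'⟩
    match S, c', hc' with
    | 0, c', hc' => exact absurd hc' (fun hh => zero_aux P c' hh)
    | (S'+1), c', hc' =>
      obtain ⟨c'', h''⟩ := lower_aux P c' hc'
      have : R ≤ S' := by
        rw [hR]
        exact Nat.sInf_le ⟨c'', h''⟩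
      omega
  rw [sosRank]
  exact le_antisymm (Nat.sInf_le mem) (le_csInf ⟨R+1, mem⟩ lb)
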